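/- Let l, m, n be positive integers with m+1 < n, (m+1) | n, (m+1) | l, and suppose ⌊n/l⌋ − ⌊(m+1)/l⌋ − ⌊(n−m−1)/l⌋ = 1. Write n − (m+1) = ql + r with 0 ≤ r < l. Then r + m + 1 = l and l | n. -/
import Mathlib


theorem floor_identity_key_step (l m n q r : ℕ) (hl : 0 < l) (hm : 0 < m) (hn : 0 < n)
    (hmn : m + 1 < n) (hdvd1 : (m + 1) ∣ n) (hdvd2 : (m + 1) ∣ l)
    (hqr : n - (m + 1) = q * l + r) (hr : r < l)
    (hfloor : ((n / l : ℕ) : ℤ) - ((m + 1) / l : ℕ) - ((n - m - 1) / l : ℕ) = 1) :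
    r + m + 1 = l ∧ l ∣ n := by
  have h1 : m + 1 ≤ n := hmn.le
  have hdr : (m + 1) ∣ r := by
    have h2 : (m + 1) ∣ (n - (m + 1)) := Nat.dvd_sub hdvd1 dvd_rfl
    rw [hqr] at h2
    exact (Nat.dvd_add_right (hdvd2.mul_left q)).mp h2
  rcases le_or_gt l (m + 1) with h | h
  · have hl' : l = m + 1 := le_antisymm h (Nat.le_of_dvd hl hdvd2)
    have hr0 : r = 0 := Nat.eq_zero_of_dvd_of_lt hdr (by omega)
    exact ⟨by omega, hl' ▸ hdvd1⟩
  · have e1 : (m + 1) / l = 0 := Nat.div_eq_of_lt h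
    have e2 : (n - m - 1) / l = q := by
      have h3 : n - m - 1 = r + q * l := by omega
      rw [h3, mul_comm q l, Nat.add_mul_div_left _ _ hl, Nat.div_eq_of_lt hr, zero_add]
    have e3 : n / l = q + 1 := by
      rw [e1, e2] at hfloor
      set d := n / l with hd
      omega
    have h4 : q * l + l ≤ n := by
      have h := Nat.div_mul_le_self n l
      rw [e3, add_mul, one_mul] at h
      exact h
    have h5 : r + (m + 1) ≤ l := by
      have hd1 : (m + 1) ∣ (l - r) := Nat.dvd_sub hdvd2 hdr
      have := Nat.le_of_dvd (by omega) hd1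
      omega
    have h6 : l ≤ r + (m + 1) := by omega
    exact ⟨by omega, ⟨q + 1, by rw [mul_add, mul_one, mul_comm]; omega⟩⟩
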